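/- Let G be a group of exponent dividing 4, metabelian, and nilpotent of class at most 4, and let ∘ be the operation x ∘ y = xy(y,x)². Then the ∘-commutator coincides with the ordinary commutator: x⁻¹ ∘ y⁻¹ ∘ x ∘ y = (x,y) for all x, y ∈ G, where the ∘-inverse of x equals x⁻¹. -/

import Mathlib

/-- The commutator `(a,b) = a⁻¹ * b⁻¹ * a * b` used in the paper. -/
def paperComm {G : Type*} [Group G] (a b : G) : G := a⁻¹ * b⁻¹ * a * b

/-- The verbal operation `x ∘ y = x * y * (y,x)²`. -/
def starOp {G : Type*} [Group G] (x y : G) : G := x * y * (paperComm y x) ^ 2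

section Aux

open Subgroup

open scoped commutatorElement

variable {G : Type*} [Group G]

private lemma mem_g1' (a b : G) : ⁅a, b⁆ ∈ (⊤ : Subgroup G).lowerCentralSeries 1 := by
  rw [Subgroup.top_lowerCentralSeries_one, commutator_def]
  exact commutator_mem_commutator (mem_top a) (mem_top b)

private lemma mem_succ' {n : ℕ} {u : G} (hu : u ∈ (⊤ : Subgroup G).lowerCentralSeries n) (g : G) :
    ⁅u, g⁆ ∈ (⊤ : Subgroup G).lowerCentralSeries (n + 1) :=
  Subgroup.lowerCentralSeries_isDescendingCentralSeries.2 u n hu g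

private lemma mem_succ'' {n : ℕ} {u : G} (hu : u ∈ (⊤ : Subgroup G).lowerCentralSeries n) (g : G) :
    ⁅g, u⁆ ∈ (⊤ : Subgroup G).lowerCentralSeries (n + 1) := by
  have := ((⊤ : Subgroup G).lowerCentralSeries (n+1)).inv_mem (mem_succ' hu g)
  rwa [commutatorElement_inv] at this

/-- Key lemma: in the variety Θ, for `u` in the derived subgroup, `⁅g,u⁆² = 1`. -/
private lemma comm_sq_eq_one
    (hexp : ∀ x : G, x ^ 4 = 1)
    (hmet : ∀ a ∈ (⊤ : Subgroup G).lowerCentralSeries 1, ∀ b ∈ (⊤ : Subgroup G).lowerCentralSeries 1, a * b = b * a)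
    (hnil : (⊤ : Subgroup G).lowerCentralSeries 4 = ⊥)
    {u : G} (hu : u ∈ (⊤ : Subgroup G).lowerCentralSeries 1) (g : G) : ⁅g, u⁆ ^ 2 = 1 := by
  set d : G := ⁅g, u⁆ with hd
  set f : G := ⁅g, d⁆ with hf
  have hd2 : d ∈ (⊤ : Subgroup G).lowerCentralSeries 2 := mem_succ'' hu g
  have hf3 : f ∈ (⊤ : Subgroup G).lowerCentralSeries 3 := mem_succ'' hd2 g
  have hd1 : d ∈ (⊤ : Subgroup G).lowerCentralSeries 1 := Subgroup.lowerCentralSeries_antitone _ (by norm_num) hd2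
  have hf1 : f ∈ (⊤ : Subgroup G).lowerCentralSeries 1 := Subgroup.lowerCentralSeries_antitone _ (by norm_num) hf3
  -- weight 5 vanishes: g commutes with f
  have hgf : g * f * g⁻¹ = f := by
    have h4 : ⁅f, g⁆ ∈ (⊤ : Subgroup G).lowerCentralSeries 4 := mem_succ' hf3 g
    rw [hnil, mem_bot, commutatorElement_eq_one_iff_mul_comm] at h4
    rw [← h4]; group
  -- conjugation formulas
  have hgu : g * u * g⁻¹ = d * u := by rw [hd]; group
  have hgd : g * d * g⁻¹ = f * d := by rw [hf]; group
  -- commutation among u, d, f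
  have hdu : d * u = u * d := hmet d hd1 u hu
  have hfu : f * u = u * f := hmet f hf1 u hu
  have hfd : f * d = d * f := hmet f hf1 d hd1
  -- expand (u*g)^4
  have hdu' : ∀ t : G, d * (u * t) = u * (d * t) := fun t => by
    rw [← mul_assoc, hdu, mul_assoc]
  have hfu' : ∀ t : G, f * (u * t) = u * (f * t) := fun t => by
    rw [← mul_assoc, hfu, mul_assoc]
  have hfd' : ∀ t : G, f * (d * t) = d * (f * t) := fun t => by
    rw [← mul_assoc, hfd, mul_assoc]
  have e1 : (u * g) ^ 4 = u * (g*u*g⁻¹) * (g*(g*u*g⁻¹)*g⁻¹) * (g*(g*(g*u*g⁻¹)*g⁻¹)*g⁻¹) * g ^ 4 := by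
    simp only [pow_succ, pow_zero, one_mul]
    group
  have e2 : g*(g*u*g⁻¹)*g⁻¹ = f * (d*d) * u := by
    rw [hgu]
    calc g * (d*u) * g⁻¹ = (g*d*g⁻¹) * (g*u*g⁻¹) := by group
    _ = (f*d) * (d*u) := by rw [hgd, hgu]
    _ = f * (d*d) * u := by group
  have e3 : g*(g*(g*u*g⁻¹)*g⁻¹)*g⁻¹ = (f*f*f) * (d*d*d) * u := by
    rw [e2]
    calc g * (f*(d*d)*u) * g⁻¹
        = (g*f*g⁻¹) * ((g*d*g⁻¹)*(g*d*g⁻¹)) * (g*u*g⁻¹) := by group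
    _ = f * ((f*d)*(f*d)) * (d*u) := by rw [hgf, hgd, hgu]
    _ = (f*f*f) * (d*d*d) * u := by
        simp only [mul_assoc, hdu', hfu', hfd', hdu, hfu, hfd]
  have e4 : (u * g) ^ 4 = u * (d*u) * (f*(d*d)*u) * ((f*f*f)*(d*d*d)*u) * g ^ 4 := by
    rw [e1, e3, e2, hgu]
  have hcollect : u * (d*u) * (f*(d*d)*u) * ((f*f*f)*(d*d*d)*u) = u^4 * d^6 * f^4 := by
    simp only [pow_succ, pow_zero, one_mul, mul_assoc, hdu', hfu', hfd', hdu, hfu, hfd]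
  have hd6 : d ^ 6 = 1 := by
    have h1 := hexp (u*g)
    rw [e4, hexp g, mul_one, hcollect, hexp u, hexp f, one_mul, mul_one] at h1
    exact h1
  calc d ^ 2 = d ^ 6 * (d ^ 4)⁻¹ := by group
  _ = 1 := by rw [hd6, hexp d]; group

/-- In the variety Θ, squares of elements of the derived subgroup are central. -/
private lemma sq_central
    (hexp : ∀ x : G, x ^ 4 = 1)
    (hmet : ∀ a ∈ (⊤ : Subgroup G).lowerCentralSeries 1, ∀ b ∈ (⊤ : Subgroup G).lowerCentralSeries 1, a * b = b * a)
    (hnil : (⊤ : Subgroup G).lowerCentralSeries 4 = ⊥)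
    {u : G} (hu : u ∈ (⊤ : Subgroup G).lowerCentralSeries 1) (g : G) : g * (u * u) = (u * u) * g := by
  set d : G := ⁅g, u⁆ with hd
  have hd1 : d ∈ (⊤ : Subgroup G).lowerCentralSeries 1 :=
    Subgroup.lowerCentralSeries_antitone _ (by norm_num) (mem_succ'' hu g)
  have hdu : d * u = u * d := hmet d hd1 u hu
  have hgu : g * u * g⁻¹ = d * u := by rw [hd]; group
  have hdd : d * d = 1 := by rw [← pow_two]; exact comm_sq_eq_one hexp hmet hnil hu g
  have h1 : g * (u*u) * g⁻¹ = (d*d) * (u*u) := by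
    calc g * (u*u) * g⁻¹ = (g*u*g⁻¹) * (g*u*g⁻¹) := by group
    _ = (d*u)*(d*u) := by rw [hgu]
    _ = d*(u*d)*u := by group
    _ = d*(d*u)*u := by rw [hdu]
    _ = (d*d)*(u*u) := by group
  have h2 : g * (u*u) * g⁻¹ = u*u := by rw [h1, hdd, one_mul]
  calc g * (u*u) = (g * (u*u) * g⁻¹) * g := by group
  _ = (u*u) * g := by rw [h2]

private lemma central_inv {z : G} (h : ∀ g : G, g * z = z * g) (g : G) :
    g * z⁻¹ = z⁻¹ * g := by
  calc g * z⁻¹ = z⁻¹ * (z * g) * z⁻¹ := by group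
  _ = z⁻¹ * (g * z) * z⁻¹ := by rw [← h g]
  _ = z⁻¹ * g := by group

end Aux

/-- In the variety Θ, the `∘`-commutator `x⁻¹ ∘ y⁻¹ ∘ x ∘ y` equals the
ordinary commutator `(x,y)`. -/
theorem starOp_comm_eq_comm {G : Type*} [Group G]
    (hexp : ∀ x : G, x ^ 4 = 1)
    (hmet : ∀ a ∈ (⊤ : Subgroup G).lowerCentralSeries 1, ∀ b ∈ (⊤ : Subgroup G).lowerCentralSeries 1, a * b = b * a)
    (hnil : (⊤ : Subgroup G).lowerCentralSeries 4 = ⊥) (x y : G) :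
    starOp (starOp (starOp x⁻¹ y⁻¹) x) y = paperComm x y := by
  set q : G := y * x * y⁻¹ * x⁻¹ with hqdef
  set r : G := x⁻¹ * y * x * y⁻¹ with hrdef
  set c : G := y⁻¹ * x⁻¹ * y * x with hcdef
  set w : G := y * x⁻¹ * y⁻¹ * x with hwdef
  -- memberships in the derived subgroup
  have hq1 : q ∈ (⊤ : Subgroup G).lowerCentralSeries 1 := by
    have h := mem_g1' y x; rwa [commutatorElement_def] at h
  have hr1 : r ∈ (⊤ : Subgroup G).lowerCentralSeries 1 := by
    have h := mem_g1' x⁻¹ y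
    rwa [commutatorElement_def, inv_inv] at h
  have hc1 : c ∈ (⊤ : Subgroup G).lowerCentralSeries 1 := by
    have h := mem_g1' y⁻¹ x⁻¹
    rwa [commutatorElement_def, inv_inv, inv_inv] at h
  have hw1 : w ∈ (⊤ : Subgroup G).lowerCentralSeries 1 := by
    have h := mem_g1' y x⁻¹
    rwa [commutatorElement_def, inv_inv] at h
  -- centrality of squares
  have hQ : ∀ g : G, g * (q*q) = (q*q) * g := sq_central hexp hmet hnil hq1
  have hR : ∀ g : G, g * (r*r) = (r*r) * g := sq_central hexp hmet hnil hr1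
  have hC : ∀ g : G, g * (c*c) = (c*c) * g := sq_central hexp hmet hnil hc1
  -- step 1
  have hA : starOp x⁻¹ y⁻¹ = x⁻¹ * y⁻¹ * (q*q) := by
    simp only [starOp, paperComm, pow_two]
    rw [hqdef]; group
  -- step 2 : the middle paperComm
  have hpcA : paperComm x (x⁻¹ * y⁻¹ * (q*q)) = r := by
    simp only [paperComm]
    calc x⁻¹ * (x⁻¹ * y⁻¹ * (q*q))⁻¹ * x * (x⁻¹ * y⁻¹ * (q*q))
        = x⁻¹ * (q*q)⁻¹ * ((y * x * y⁻¹) * (q*q)) := by group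
    _ = x⁻¹ * (q*q)⁻¹ * ((q*q) * (y * x * y⁻¹)) := by rw [hQ (y * x * y⁻¹)]
    _ = r := by rw [hrdef]; group
  -- q*q = r*r, and r⁴ = 1
  have hqr : q*q = r*r := by
    calc q*q = (x * (r*r)) * x⁻¹ := by rw [hqdef, hrdef]; group
    _ = ((r*r) * x) * x⁻¹ := by rw [hR x]
    _ = r*r := by group
  have hr4 : (r*r)*(r*r) = 1 := by
    have h := hexp r
    rwa [show (4:ℕ) = 2+2 from rfl, pow_add, pow_two] at h
  have hZ1 : (q*q)*(r*r) = 1 := by rw [hqr]; exact hr4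
  -- step 3
  have hB : starOp (x⁻¹ * y⁻¹ * (q*q)) x = x⁻¹ * y⁻¹ * x := by
    simp only [starOp, hpcA, pow_two]
    calc x⁻¹ * y⁻¹ * (q*q) * x * (r*r)
        = x⁻¹ * y⁻¹ * ((q*q) * x) * (r*r) := by group
    _ = x⁻¹ * y⁻¹ * (x * (q*q)) * (r*r) := by rw [← hQ x]
    _ = x⁻¹ * y⁻¹ * x * ((q*q) * (r*r)) := by group
    _ = x⁻¹ * y⁻¹ * x := by rw [hZ1, mul_one]
  -- step 4 : the last paperComm
  have hpcB : paperComm y (x⁻¹ * y⁻¹ * x) = c * w := by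
    simp only [paperComm, hcdef, hwdef]; group
  -- (c*w)² = 1
  have hwc : w * c = c * w := hmet w hw1 c hc1
  have hcw2 : (c*w)*(c*w) = (c*c)*(w*w) := by
    calc (c*w)*(c*w) = c*(w*c)*w := by group
    _ = c*(c*w)*w := by rw [hwc]
    _ = (c*c)*(w*w) := by group
  have hww : w*w = (c*c)⁻¹ := by
    calc w*w = (y * (c*c)⁻¹) * y⁻¹ := by rw [hwdef, hcdef]; group
    _ = ((c*c)⁻¹ * y) * y⁻¹ := by rw [central_inv hC y]
    _ = (c*c)⁻¹ := by group
  have hcw1 : (c*w)*(c*w) = 1 := by rw [hcw2, hww, mul_inv_cancel]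
  -- final assembly
  rw [hA, hB]
  simp only [starOp]
  rw [hpcB, pow_two, hcw1, mul_one]
  rfl
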